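/- arXiv:2011.14822 — 3 statements merged into one kernel-verified Lean document; each statement's English description precedes it below -/
import Mathlib

section
/- Under strict ABC scores, if two subsets S and S' of customers satisfy that S contains strictly more A customers than S', then the total score of S exceeds the total score of S', regardless of how many B and C customers each contains (within the given classes). -/
/-- Under strict ABC scores, a subset containing strictly more A customers has
a strictly larger total score, regardless of the B and C customers contained. -/
theorem strict_abc_more_A_higher_score {ι : Type*} [DecidableEq ι]
    (NC NAC NBC NCC : Finset ι)
    (hpart : NAC ∪ NBC ∪ NCC = NC)
    (hAB : Disjoint NAC NBC) (hAC : Disjoint NAC NCC) (hBC : Disjoint NBC NCC)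
    (pC pB pA : ℕ)
    (hpC : pC = 1)
    (hpB : pB = NCC.card + 1)
    (hpA : pA = NCC.card + pB * NBC.card + 1)
    (score : ι → ℕ)
    (hscore : ∀ i, score i = if i ∈ NAC then pA else if i ∈ NBC then pB else pC)
    (S S' : Finset ι) (hS : S ⊆ NC) (hS' : S' ⊆ NC)
    (h : (S' ∩ NAC).card < (S ∩ NAC).card) :
    ∑ i ∈ S', score i < ∑ i ∈ S, score i := by
  -- Lower bound for S : sum ≥ pA * |S ∩ NAC|
  have hlow : pA * (S ∩ NAC).card ≤ ∑ i ∈ S, score i := by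
    calc pA * (S ∩ NAC).card = ∑ i ∈ S ∩ NAC, score i := by
          rw [Finset.sum_congr rfl (fun i hi => by
            rw [hscore i, if_pos (Finset.mem_of_mem_inter_right hi)]),
            Finset.sum_const, smul_eq_mul, mul_comm]
      _ ≤ ∑ i ∈ S, score i :=
          Finset.sum_le_sum_of_subset (Finset.inter_subset_left)
  -- Decompose S'
  set A' := S' ∩ NAC with hA'
  set B' := S' ∩ NBC with hB'
  set C' := S' \ (NAC ∪ NBC) with hC'
  have hS'eq : S' = A' ∪ B' ∪ C' := by
    ext i
    simp only [hA', hB', hC', Finset.mem_union, Finset.mem_inter, Finset.mem_sdiff]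
    tauto
  have hdAB : Disjoint A' B' :=
    (hAB.mono Finset.inter_subset_right Finset.inter_subset_right)
  have hdC : Disjoint (A' ∪ B') C' := by
    rw [Finset.disjoint_left]
    intro i hi hic
    simp only [hC', Finset.mem_sdiff, Finset.mem_union] at hic
    simp only [hA', hB', Finset.mem_union, Finset.mem_inter] at hi
    tauto
  have hsumA : ∑ i ∈ A', score i = pA * A'.card := by
    rw [Finset.sum_congr rfl (fun i hi => by
      rw [hscore i, if_pos (Finset.mem_of_mem_inter_right hi)]),
      Finset.sum_const, smul_eq_mul, mul_comm]
  have hsumB : ∑ i ∈ B', score i = pB * B'.card := by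
    rw [Finset.sum_congr rfl (fun i hi => by
      have hiB : i ∈ NBC := Finset.mem_of_mem_inter_right hi
      have hiA : i ∉ NAC := fun hiA => (Finset.disjoint_left.mp hAB) hiA hiB
      rw [hscore i, if_neg hiA, if_pos hiB]),
      Finset.sum_const, smul_eq_mul, mul_comm]
  have hsumC : ∑ i ∈ C', score i = C'.card := by
    have hone : ∀ i ∈ C', score i = 1 := fun i hi => by
      simp only [hC', Finset.mem_sdiff, Finset.mem_union] at hi
      push_neg at hi
      rw [hscore i, if_neg hi.2.1, if_neg hi.2.2, hpC]
    rw [Finset.sum_congr rfl hone, Finset.sum_const, smul_eq_mul, mul_one]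
  have hBle : B'.card ≤ NBC.card :=
    Finset.card_le_card Finset.inter_subset_right
  have hCle : C'.card ≤ NCC.card := by
    apply Finset.card_le_card
    intro i hi
    simp only [hC', Finset.mem_sdiff, Finset.mem_union] at hi
    have := hS' hi.1
    rw [← hpart] at this
    simp only [Finset.mem_union] at this
    tauto
  have hsplit : ∑ i ∈ S', score i = pA * A'.card + pB * B'.card + C'.card := by
    rw [hS'eq, Finset.sum_union hdC, Finset.sum_union hdAB, hsumA, hsumB, hsumC]
  have hub : ∑ i ∈ S', score i ≤ pA * A'.card + pB * NBC.card + NCC.card := by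
    rw [hsplit]
    have := Nat.mul_le_mul_left pB hBle
    omega
  have hstep : pA * A'.card + pB * NBC.card + NCC.card < pA * (S ∩ NAC).card := by
    calc pA * A'.card + pB * NBC.card + NCC.card < pA * (A'.card + 1) := by
          rw [Nat.mul_add, mul_one, hpA]; linarith
      _ ≤ pA * (S ∩ NAC).card := Nat.mul_le_mul_left pA h
  exact lt_of_le_of_lt hub (lt_of_lt_of_le hstep hlow)
end

section
/- Under strict ABC scores, if subsets S and S' contain the same number of A customers but S contains strictly more B customers, then the total score of S exceeds the total score of S'. -/
lemma abc_sum_decomp {ι : Type*} [DecidableEq ι]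
    (NAC NBC NCC : Finset ι)
    (hAB : Disjoint NAC NBC) (hAC : Disjoint NAC NCC) (hBC : Disjoint NBC NCC)
    (pC pB pA : ℕ) (score : ι → ℕ)
    (hscore : ∀ i, score i = if i ∈ NAC then pA else if i ∈ NBC then pB else pC)
    (S : Finset ι) (hS : S ⊆ NAC ∪ NBC ∪ NCC) :
    ∑ i ∈ S, score i
      = pA * (S ∩ NAC).card + pB * (S ∩ NBC).card + pC * (S ∩ NCC).card := by
  have hSeq : S = (S ∩ NAC) ∪ (S ∩ NBC) ∪ (S ∩ NCC) := by
    rw [← Finset.inter_union_distrib_left, ← Finset.inter_union_distrib_left]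
    exact (Finset.inter_eq_left.mpr hS).symm
  have d1 : Disjoint (S ∩ NAC) (S ∩ NBC) :=
    (hAB.mono Finset.inter_subset_right Finset.inter_subset_right)
  have d2 : Disjoint (S ∩ NAC ∪ S ∩ NBC) (S ∩ NCC) :=
    Finset.disjoint_union_left.mpr
      ⟨hAC.mono Finset.inter_subset_right Finset.inter_subset_right,
       hBC.mono Finset.inter_subset_right Finset.inter_subset_right⟩
  conv_lhs => rw [hSeq, Finset.sum_union d2, Finset.sum_union d1]
  have h1 : ∑ i ∈ S ∩ NAC, score i = pA * (S ∩ NAC).card := by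
    rw [Finset.sum_congr rfl (fun i hi => ?_), Finset.sum_const, mul_comm]
    · rfl
    · rw [hscore i, if_pos (Finset.mem_inter.mp hi).2]
  have h2 : ∑ i ∈ S ∩ NBC, score i = pB * (S ∩ NBC).card := by
    rw [Finset.sum_congr rfl (fun i hi => ?_), Finset.sum_const, mul_comm]
    · rfl
    · have hb := (Finset.mem_inter.mp hi).2
      rw [hscore i, if_neg (fun ha => hAB.forall_ne_finset ha hb rfl), if_pos hb]
  have h3 : ∑ i ∈ S ∩ NCC, score i = pC * (S ∩ NCC).card := by
    rw [Finset.sum_congr rfl (fun i hi => ?_), Finset.sum_const, mul_comm]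
    · rfl
    · have hc := (Finset.mem_inter.mp hi).2
      rw [hscore i, if_neg (fun ha => hAC.forall_ne_finset ha hc rfl),
        if_neg (fun hb => hBC.forall_ne_finset hb hc rfl)]
  rw [h1, h2, h3]

/-- Under strict ABC scores, if two subsets contain the same number of A
customers but the first contains strictly more B customers, then the first has
a strictly larger total score. -/
theorem strict_abc_more_B_higher_score {ι : Type*} [DecidableEq ι]
    (NC NAC NBC NCC : Finset ι)
    (hpart : NAC ∪ NBC ∪ NCC = NC)
    (hAB : Disjoint NAC NBC) (hAC : Disjoint NAC NCC) (hBC : Disjoint NBC NCC)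
    (pC pB pA : ℕ)
    (hpC : pC = 1)
    (hpB : pB = NCC.card + 1)
    (hpA : pA = NCC.card + pB * NBC.card + 1)
    (score : ι → ℕ)
    (hscore : ∀ i, score i = if i ∈ NAC then pA else if i ∈ NBC then pB else pC)
    (S S' : Finset ι) (hS : S ⊆ NC) (hS' : S' ⊆ NC)
    (hA : (S ∩ NAC).card = (S' ∩ NAC).card)
    (hB : (S' ∩ NBC).card < (S ∩ NBC).card) :
    ∑ i ∈ S', score i < ∑ i ∈ S, score i := by
  subst hpart
  rw [abc_sum_decomp NAC NBC NCC hAB hAC hBC pC pB pA score hscore S hS,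
    abc_sum_decomp NAC NBC NCC hAB hAC hBC pC pB pA score hscore S' hS', hA]
  have hc' : (S' ∩ NCC).card ≤ NCC.card :=
    Finset.card_le_card Finset.inter_subset_right
  have key : pB * (S' ∩ NBC).card + pC * (S' ∩ NCC).card < pB * (S ∩ NBC).card := by
    calc pB * (S' ∩ NBC).card + pC * (S' ∩ NCC).card
        < pB * (S' ∩ NBC).card + pB := by
          rw [hpC, hpB]; omega
      _ = pB * ((S' ∩ NBC).card + 1) := by ring
      _ ≤ pB * (S ∩ NBC).card := Nat.mul_le_mul_left _ hB
  omega
end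

section
/- The strict ABC scoring induces a lexicographic order: for subsets S, S' of customers, total score of S is greater than total score of S' if and only if the triple (|S ∩ N_AC|, |S ∩ N_BC|, |S ∩ N_CC|) is lexicographically greater than the corresponding triple for S'. -/
/-- Strict ABC scoring induces a lexicographic order: the total score of `S`
exceeds that of `S'` iff the triple of class counts of `S` is lexicographically
greater than that of `S'`. -/
theorem strict_abc_lex_order {ι : Type*} [DecidableEq ι]
    (NC NAC NBC NCC : Finset ι)
    (hpart : NAC ∪ NBC ∪ NCC = NC)
    (hAB : Disjoint NAC NBC) (hAC : Disjoint NAC NCC) (hBC : Disjoint NBC NCC)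
    (pC pB pA : ℕ)
    (hpC : pC = 1)
    (hpB : pB = NCC.card + 1)
    (hpA : pA = NCC.card + pB * NBC.card + 1)
    (score : ι → ℕ)
    (hscore : ∀ i, score i = if i ∈ NAC then pA else if i ∈ NBC then pB else pC)
    (S S' : Finset ι) (hS : S ⊆ NC) (hS' : S' ⊆ NC) :
    (∑ i ∈ S', score i < ∑ i ∈ S, score i) ↔
      ((S' ∩ NAC).card < (S ∩ NAC).card ∨
        ((S ∩ NAC).card = (S' ∩ NAC).card ∧
          ((S' ∩ NBC).card < (S ∩ NBC).card ∨
            ((S ∩ NBC).card = (S' ∩ NBC).card ∧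
              (S' ∩ NCC).card < (S ∩ NCC).card)))) := by
  -- sum decomposition
  have key : ∀ T : Finset ι, T ⊆ NC →
      ∑ i ∈ T, score i
        = pA * (T ∩ NAC).card + pB * (T ∩ NBC).card + (T ∩ NCC).card := by
    intro T hT
    have hTeq : T = (T ∩ NAC) ∪ (T ∩ NBC) ∪ (T ∩ NCC) := by
      rw [← Finset.inter_union_distrib_left, ← Finset.inter_union_distrib_left,
        hpart, Finset.inter_eq_left.mpr hT]
    have d1 : Disjoint (T ∩ NAC) (T ∩ NBC) :=
      hAB.mono Finset.inter_subset_right Finset.inter_subset_right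
    have d2 : Disjoint ((T ∩ NAC) ∪ (T ∩ NBC)) (T ∩ NCC) :=
      Finset.disjoint_union_left.mpr
        ⟨hAC.mono Finset.inter_subset_right Finset.inter_subset_right,
         hBC.mono Finset.inter_subset_right Finset.inter_subset_right⟩
    have sA : ∑ i ∈ T ∩ NAC, score i = pA * (T ∩ NAC).card := by
      rw [Finset.sum_congr rfl (fun i hi => ?_), Finset.sum_const, smul_eq_mul,
        mul_comm]
      have := (Finset.mem_inter.mp hi).2
      rw [hscore]; simp [this]
    have sB : ∑ i ∈ T ∩ NBC, score i = pB * (T ∩ NBC).card := by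
      rw [Finset.sum_congr rfl (fun i hi => ?_), Finset.sum_const, smul_eq_mul,
        mul_comm]
      have hi2 := (Finset.mem_inter.mp hi).2
      have : i ∉ NAC := Finset.disjoint_right.mp hAB hi2
      rw [hscore]; simp [this, hi2]
    have sC : ∑ i ∈ T ∩ NCC, score i = (T ∩ NCC).card := by
      rw [Finset.sum_congr rfl (fun i hi => ?_), Finset.sum_const, smul_eq_mul,
        mul_one]
      have hi2 := (Finset.mem_inter.mp hi).2
      have h1 : i ∉ NAC := Finset.disjoint_right.mp hAC hi2
      have h2 : i ∉ NBC := Finset.disjoint_right.mp hBC hi2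
      rw [hscore]; simp [h1, h2, hpC]
    conv_lhs => rw [hTeq]
    rw [Finset.sum_union d2, Finset.sum_union d1, sA, sB, sC]
  -- numeric lex lemma
  set nB := NBC.card with hnB
  set nC := NCC.card with hnC
  have lex_lt : ∀ a b c a' b' c' : ℕ, b ≤ nB → c ≤ nC → b' ≤ nB → c' ≤ nC →
      (a' < a ∨ (a = a' ∧ (b' < b ∨ (b = b' ∧ c' < c)))) →
      pA * a' + pB * b' + c' < pA * a + pB * b + c := by
    intro a b c a' b' c' hb hc hb' hc' h
    rcases h with h | ⟨rfl, h | ⟨rfl, h⟩⟩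
    · have h1 : pB * b' ≤ pB * nB := Nat.mul_le_mul_left pB hb'
      have h2 : pA * (a' + 1) ≤ pA * a := Nat.mul_le_mul_left pA h
      have h3 : pA * (a' + 1) = pA * a' + pA := by ring
      have h4 : pA * a' + pB * b' + c' < pA * a' + pA := by
        rw [hpA]; omega
      have h5 : 0 ≤ pB * b := Nat.zero_le _
      have h6 : 0 ≤ c := Nat.zero_le _
      linarith
    · have h1 : pB * (b' + 1) ≤ pB * b := Nat.mul_le_mul_left pB h
      have h2 : pB * (b' + 1) = pB * b' + pB := by ring
      have h4 : pB * b' + c' < pB * b' + pB := by rw [hpB]; omega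
      linarith
    · omega
  have bnd : ∀ T : Finset ι, (T ∩ NBC).card ≤ nB ∧ (T ∩ NCC).card ≤ nC := by
    intro T
    exact ⟨Finset.card_le_card Finset.inter_subset_right,
      Finset.card_le_card Finset.inter_subset_right⟩
  obtain ⟨hb, hc⟩ := bnd S
  obtain ⟨hb', hc'⟩ := bnd S'
  rw [key S hS, key S' hS']
  constructor
  · intro hlt
    rcases lt_trichotomy (S' ∩ NAC).card (S ∩ NAC).card with h | h | h
    · exact Or.inl h
    · rcases lt_trichotomy (S' ∩ NBC).card (S ∩ NBC).card with h2 | h2 | h2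
      · exact Or.inr ⟨h.symm, Or.inl h2⟩
      · rcases lt_trichotomy (S' ∩ NCC).card (S ∩ NCC).card with h3 | h3 | h3
        · exact Or.inr ⟨h.symm, Or.inr ⟨h2.symm, h3⟩⟩
        · rw [h, h2, h3] at hlt; exact absurd hlt (lt_irrefl _)
        · have := lex_lt _ _ _ _ _ _ hb' hc' hb hc (Or.inr ⟨h, Or.inr ⟨h2, h3⟩⟩)
          omega
      · have := lex_lt _ _ _ _ _ _ hb' hc' hb hc (Or.inr ⟨h, Or.inl h2⟩)
        omega
    · have := lex_lt _ _ _ _ _ _ hb' hc' hb hc (Or.inl h)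
      omega
  · exact lex_lt _ _ _ _ _ _ hb hc hb' hc'
end
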